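/- arXiv:1904.07147 — 2 statements merged into one kernel-verified Lean document; each statement's English description precedes it below -/
import Mathlib

section
/- If (Y, X̄, x) is a spurious 2-critical point of (BM_n) with multiplier λ ∈ ℝᵐ, then C ∈ 𝒱̲ × 𝒱̄ × {0} + image(𝒜*); explicitly: s(λ) = 0; there exists j ∈ {1,…,k} with p_j ≤ n_j and rank S_j(λ) ≤ n_j − p_j; and there is an attainable rank tuple (r_{k+1},…,r_ℓ) (namely r_j = rank X_j) with rank S_j(λ) ≤ n_j − r_j for all j > k. -/
open Matrix MeasureTheory

noncomputable section

/-- The `r`-th triangular number `τ(r) = r(r+1)/2`. -/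
def tau (r : ℕ) : ℕ := r * (r + 1) / 2

/-- The space `Sⁿ` of symmetric `n × n` real matrices, as a submodule of all matrices. -/
def SymMat (n : ℕ) : Submodule ℝ (Matrix (Fin n) (Fin n) ℝ) where
  carrier := {A | A.IsSymm}
  add_mem' := fun ha hb => ha.add hb
  zero_mem' := by simp [Matrix.IsSymm]
  smul_mem' := fun c A hA => hA.smul c

instance (n : ℕ) : MeasurableSpace (Matrix (Fin n) (Fin n) ℝ) := borel _
instance (n : ℕ) : BorelSpace (Matrix (Fin n) (Fin n) ℝ) := ⟨rfl⟩
instance (n : ℕ) : MeasurableSpace (SymMat n) := borel _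
instance (n : ℕ) : BorelSpace (SymMat n) := ⟨rfl⟩

/- Block SDP setting: the PSD blocks `1, …, ℓ` are split into the `k` factored blocks,
of sizes `n₁ : Fin k → ℕ` (with factorization ranks `p : Fin k → ℕ`), and the `ℓ - k`
unfactored blocks, of sizes `n₂ : Fin l₂ → ℕ`; there is also a free variable in `ℝ^d`.
A linear map `𝒜 : E → ℝᵐ` on `E = S^{n₁} × ⋯ × S^{n_ℓ} × ℝ^d` is represented by symmetric
matrices `A i j`, `B i j` and vectors `a i`, so that the adjoint is
`𝒜*(λ) = (Σᵢ λᵢ A i ·, Σᵢ λᵢ B i ·, Σᵢ λᵢ a i)`. -/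

variable (k l₂ d m : ℕ) (n₁ : Fin k → ℕ) (n₂ : Fin l₂ → ℕ) (p : Fin k → ℕ)

/-- A point of `E`, in (matrix blocks for `j ≤ k`, matrix blocks for `j > k`, free part) form. -/
abbrev BlockPt := ((j : Fin k) → Matrix (Fin (n₁ j)) (Fin (n₁ j)) ℝ) ×
  ((j : Fin l₂) → Matrix (Fin (n₂ j)) (Fin (n₂ j)) ℝ) × (Fin d → ℝ)

/-- The value `𝒜(X)ᵢ` of the `i`-th linear constraint at a point `X ∈ E`. -/
def constrVal (A : Fin m → (j : Fin k) → Matrix (Fin (n₁ j)) (Fin (n₁ j)) ℝ)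
    (B : Fin m → (j : Fin l₂) → Matrix (Fin (n₂ j)) (Fin (n₂ j)) ℝ)
    (a : Fin m → Fin d → ℝ) (i : Fin m) (X : BlockPt k l₂ d n₁ n₂) : ℝ :=
  ∑ j, (A i j * X.1 j).trace + ∑ j, (B i j * X.2.1 j).trace + ∑ t, a i t * X.2.2 t

/-- The objective value `⟨C, X⟩` for cost data `(C₁, C₂, c)`. -/
def objVal (C₁ : (j : Fin k) → Matrix (Fin (n₁ j)) (Fin (n₁ j)) ℝ)
    (C₂ : (j : Fin l₂) → Matrix (Fin (n₂ j)) (Fin (n₂ j)) ℝ)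
    (c : Fin d → ℝ) (X : BlockPt k l₂ d n₁ n₂) : ℝ :=
  ∑ j, (C₁ j * X.1 j).trace + ∑ j, (C₂ j * X.2.1 j).trace + ∑ t, c t * X.2.2 t

/-- The feasible set of (SDP_n): all matrix blocks PSD and `𝒜(X) = b`. -/
def FeasB (A : Fin m → (j : Fin k) → Matrix (Fin (n₁ j)) (Fin (n₁ j)) ℝ)
    (B : Fin m → (j : Fin l₂) → Matrix (Fin (n₂ j)) (Fin (n₂ j)) ℝ)
    (a : Fin m → Fin d → ℝ) (b : Fin m → ℝ) : Set (BlockPt k l₂ d n₁ n₂) :=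
  {X | (∀ j, (X.1 j).PosSemidef) ∧ (∀ j, (X.2.1 j).PosSemidef) ∧
    ∀ i, constrVal k l₂ d m n₁ n₂ A B a i X = b i}

/-- The slack component `S_j(λ) = C_j - Σᵢ λᵢ A i j` for a factored block `j ≤ k`. -/
def SlackF (C₁ : (j : Fin k) → Matrix (Fin (n₁ j)) (Fin (n₁ j)) ℝ)
    (A : Fin m → (j : Fin k) → Matrix (Fin (n₁ j)) (Fin (n₁ j)) ℝ)
    (lam : Fin m → ℝ) (j : Fin k) : Matrix (Fin (n₁ j)) (Fin (n₁ j)) ℝ :=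
  C₁ j - ∑ i, lam i • A i j

/-- The slack component `S_j(λ) = C_j - Σᵢ λᵢ B i j` for an unfactored block `j > k`. -/
def SlackU (C₂ : (j : Fin l₂) → Matrix (Fin (n₂ j)) (Fin (n₂ j)) ℝ)
    (B : Fin m → (j : Fin l₂) → Matrix (Fin (n₂ j)) (Fin (n₂ j)) ℝ)
    (lam : Fin m → ℝ) (j : Fin l₂) : Matrix (Fin (n₂ j)) (Fin (n₂ j)) ℝ :=
  C₂ j - ∑ i, lam i • B i j

/-- The free slack component `s(λ) = c - Σᵢ λᵢ a i`. -/
def slackFree (c : Fin d → ℝ) (a : Fin m → Fin d → ℝ) (lam : Fin m → ℝ) : Fin d → ℝ :=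
  c - ∑ i, lam i • a i

/-- `(Y, X̄, x)` is 1st-order critical for (BM_n) with multiplier `λ`. -/
def IsCrit1B (C₁ : (j : Fin k) → Matrix (Fin (n₁ j)) (Fin (n₁ j)) ℝ)
    (C₂ : (j : Fin l₂) → Matrix (Fin (n₂ j)) (Fin (n₂ j)) ℝ) (c : Fin d → ℝ)
    (A : Fin m → (j : Fin k) → Matrix (Fin (n₁ j)) (Fin (n₁ j)) ℝ)
    (B : Fin m → (j : Fin l₂) → Matrix (Fin (n₂ j)) (Fin (n₂ j)) ℝ)
    (a : Fin m → Fin d → ℝ) (b : Fin m → ℝ)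
    (Y : (j : Fin k) → Matrix (Fin (n₁ j)) (Fin (p j)) ℝ)
    (Xbar : (j : Fin l₂) → Matrix (Fin (n₂ j)) (Fin (n₂ j)) ℝ)
    (x : Fin d → ℝ) (lam : Fin m → ℝ) : Prop :=
  (fun j => Y j * (Y j)ᵀ, Xbar, x) ∈ FeasB k l₂ d m n₁ n₂ A B a b ∧
  slackFree d m c a lam = 0 ∧
  (∀ j, SlackF k m n₁ C₁ A lam j * Y j = 0) ∧
  (∀ j, (SlackU l₂ m n₂ C₂ B lam j).PosSemidef ∧
    (SlackU l₂ m n₂ C₂ B lam j * Xbar j).trace = 0)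

/-- `(Y, X̄, x)` is 2nd-order critical for (BM_n) with multiplier `λ`. -/
def IsCrit2B (C₁ : (j : Fin k) → Matrix (Fin (n₁ j)) (Fin (n₁ j)) ℝ)
    (C₂ : (j : Fin l₂) → Matrix (Fin (n₂ j)) (Fin (n₂ j)) ℝ) (c : Fin d → ℝ)
    (A : Fin m → (j : Fin k) → Matrix (Fin (n₁ j)) (Fin (n₁ j)) ℝ)
    (B : Fin m → (j : Fin l₂) → Matrix (Fin (n₂ j)) (Fin (n₂ j)) ℝ)
    (a : Fin m → Fin d → ℝ) (b : Fin m → ℝ)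
    (Y : (j : Fin k) → Matrix (Fin (n₁ j)) (Fin (p j)) ℝ)
    (Xbar : (j : Fin l₂) → Matrix (Fin (n₂ j)) (Fin (n₂ j)) ℝ)
    (x : Fin d → ℝ) (lam : Fin m → ℝ) : Prop :=
  IsCrit1B k l₂ d m n₁ n₂ p C₁ C₂ c A B a b Y Xbar x lam ∧
  ∀ j, ∀ U : Matrix (Fin (n₁ j)) (Fin (p j)) ℝ,
    (∀ i, (A i j * (U * (Y j)ᵀ + Y j * Uᵀ)).trace = 0) →
    0 ≤ (SlackF k m n₁ C₁ A lam j * (U * Uᵀ)).trace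

/-- `X` is an optimal solution of (SDP_n). -/
def IsOptimalB (C₁ : (j : Fin k) → Matrix (Fin (n₁ j)) (Fin (n₁ j)) ℝ)
    (C₂ : (j : Fin l₂) → Matrix (Fin (n₂ j)) (Fin (n₂ j)) ℝ) (c : Fin d → ℝ)
    (A : Fin m → (j : Fin k) → Matrix (Fin (n₁ j)) (Fin (n₁ j)) ℝ)
    (B : Fin m → (j : Fin l₂) → Matrix (Fin (n₂ j)) (Fin (n₂ j)) ℝ)
    (a : Fin m → Fin d → ℝ) (b : Fin m → ℝ)
    (X : BlockPt k l₂ d n₁ n₂) : Prop :=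
  X ∈ FeasB k l₂ d m n₁ n₂ A B a b ∧
  ∀ X' ∈ FeasB k l₂ d m n₁ n₂ A B a b,
    objVal k l₂ d n₁ n₂ C₁ C₂ c X ≤ objVal k l₂ d n₁ n₂ C₁ C₂ c X'

/-- A rank tuple `r` for the unfactored blocks is attainable if some feasible point of
(SDP_n) has `rank X_j = r j` for all unfactored blocks `j`. -/
def AttainableRanks (A : Fin m → (j : Fin k) → Matrix (Fin (n₁ j)) (Fin (n₁ j)) ℝ)
    (B : Fin m → (j : Fin l₂) → Matrix (Fin (n₂ j)) (Fin (n₂ j)) ℝ)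
    (a : Fin m → Fin d → ℝ) (b : Fin m → ℝ) (r : Fin l₂ → ℕ) : Prop :=
  ∃ X ∈ FeasB k l₂ d m n₁ n₂ A B a b, ∀ j, (X.2.1 j).rank = r j

section Helpers

open scoped MatrixOrder in
noncomputable def Matrix.PosSemidef.sqrt {N : Type*} [Fintype N] [DecidableEq N]
    {S : Matrix N N ℝ} (_hS : S.PosSemidef) : Matrix N N ℝ := CFC.sqrt S

open scoped MatrixOrder in
lemma Matrix.PosSemidef.sqrt_mul_self {N : Type*} [Fintype N] [DecidableEq N]
    {S : Matrix N N ℝ} (hS : S.PosSemidef) : hS.sqrt * hS.sqrt = S :=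
  CFC.sqrt_mul_sqrt_self S hS.nonneg

open scoped MatrixOrder in
lemma Matrix.PosSemidef.posSemidef_sqrt {N : Type*} [Fintype N] [DecidableEq N]
    {S : Matrix N N ℝ} (hS : S.PosSemidef) : hS.sqrt.PosSemidef :=
  (CFC.sqrt_nonneg S).posSemidef

lemma traceAux {N P : Type*} [Fintype N] [Fintype P] (M : Matrix N P ℝ) :
    (Mᵀ * M).trace = ∑ q, ∑ i, (M i q) ^ 2 := by
  simp [Matrix.trace, Matrix.diag, Matrix.mul_apply, sq]

lemma eq_zero_of_traceAux {N P : Type*} [Fintype N] [Fintype P] (M : Matrix N P ℝ)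
    (h : (Mᵀ * M).trace = 0) : M = 0 := by
  rw [traceAux] at h
  ext i q
  have h1 := (Finset.sum_eq_zero_iff_of_nonneg
    (fun q _ => Finset.sum_nonneg fun i _ => sq_nonneg (M i q))).mp h q (Finset.mem_univ q)
  have h2 := (Finset.sum_eq_zero_iff_of_nonneg
    (fun i _ => sq_nonneg (M i q))).mp h1 i (Finset.mem_univ i)
  simpa using pow_eq_zero_iff two_ne_zero |>.mp h2

lemma trace_mul_psd_eq {N : Type*} [Fintype N] [DecidableEq N] {S X : Matrix N N ℝ}
    (hS : S.PosSemidef) (hX : X.PosSemidef) :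
    (S * X).trace = ((hS.sqrt * hX.sqrt)ᵀ * (hS.sqrt * hX.sqrt)).trace := by
  have hQ : hS.sqrtᵀ = hS.sqrt := by
    rw [← Matrix.conjTranspose_eq_transpose_of_trivial]
    exact hS.posSemidef_sqrt.isHermitian
  have hR : hX.sqrtᵀ = hX.sqrt := by
    rw [← Matrix.conjTranspose_eq_transpose_of_trivial]
    exact hX.posSemidef_sqrt.isHermitian
  rw [Matrix.transpose_mul, hQ, hR]
  have h1 : hX.sqrt * hS.sqrt * (hS.sqrt * hX.sqrt) = (hX.sqrt * S) * hX.sqrt := by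
    calc hX.sqrt * hS.sqrt * (hS.sqrt * hX.sqrt)
        = hX.sqrt * (hS.sqrt * hS.sqrt) * hX.sqrt := by simp only [Matrix.mul_assoc]
      _ = (hX.sqrt * S) * hX.sqrt := by rw [hS.sqrt_mul_self]
  have h2 : (hX.sqrt * S * hX.sqrt).trace = (S * X).trace := by
    rw [Matrix.trace_mul_comm, ← Matrix.mul_assoc, hX.sqrt_mul_self, Matrix.trace_mul_comm]
  rw [h1, h2]

lemma psd_trace_mul_nonneg {N : Type*} [Fintype N] [DecidableEq N] {S X : Matrix N N ℝ}
    (hS : S.PosSemidef) (hX : X.PosSemidef) : 0 ≤ (S * X).trace := by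
  rw [trace_mul_psd_eq hS hX, traceAux]
  exact Finset.sum_nonneg fun q _ => Finset.sum_nonneg fun i _ => sq_nonneg _

lemma psd_mul_eq_zero_of_trace {N : Type*} [Fintype N] [DecidableEq N] {S X : Matrix N N ℝ}
    (hS : S.PosSemidef) (hX : X.PosSemidef) (h : (S * X).trace = 0) : S * X = 0 := by
  have hM : hS.sqrt * hX.sqrt = 0 :=
    eq_zero_of_traceAux _ (by rw [← trace_mul_psd_eq hS hX]; exact h)
  have h1 : hS.sqrt * (hS.sqrt * hX.sqrt) * hX.sqrt = S * X := by
    calc hS.sqrt * (hS.sqrt * hX.sqrt) * hX.sqrt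
        = (hS.sqrt * hS.sqrt) * (hX.sqrt * hX.sqrt) := by simp only [Matrix.mul_assoc]
      _ = S * X := by rw [hS.sqrt_mul_self, hX.sqrt_mul_self]
  rw [← h1, hM]
  simp

lemma rank_eq_of_ker {N P : ℕ} (Y : Matrix (Fin N) (Fin P) ℝ)
    (h : ∀ z, Y *ᵥ z = 0 → z = 0) : Y.rank = P := by
  have hk : LinearMap.ker Y.mulVecLin = ⊥ := by
    ext z
    simp only [LinearMap.mem_ker, Matrix.mulVecLin_apply, Submodule.mem_bot]
    exact ⟨h z, fun hz => by rw [hz, Matrix.mulVec_zero]⟩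
  have := LinearMap.finrank_range_of_inj (LinearMap.ker_eq_bot.mp hk)
  rw [Matrix.rank, this, Module.finrank_fintype_fun_eq_card, Fintype.card_fin]

lemma vecMulVec_mul_transpose_eq_zero {N P Q : Type*} [Fintype N] [Fintype P] [Fintype Q]
    (u : N → ℝ) (z : P → ℝ) (Y : Matrix Q P ℝ) (hz : Y *ᵥ z = 0) :
    vecMulVec u z * Yᵀ = 0 := by
  ext i q
  have hq := congrFun hz q
  simp only [Matrix.mulVec, dotProduct, Pi.zero_apply] at hq
  simp only [Matrix.mul_apply, Matrix.vecMulVec_apply, Matrix.transpose_apply,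
    Matrix.zero_apply]
  calc ∑ b, u i * z b * Y q b = u i * ∑ b, Y q b * z b := by
        rw [Finset.mul_sum]; exact Finset.sum_congr rfl fun b _ => by ring
    _ = 0 := by rw [hq, mul_zero]

lemma vecMulVec_mul_self_transpose {N P : Type*} [Fintype N] [Fintype P]
    (u : N → ℝ) (z : P → ℝ) :
    vecMulVec u z * (vecMulVec u z)ᵀ = (∑ b, z b ^ 2) • vecMulVec u u := by
  ext i j
  simp only [Matrix.mul_apply, Matrix.vecMulVec_apply, Matrix.transpose_apply,
    Matrix.smul_apply, smul_eq_mul, Finset.sum_mul]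
  exact Finset.sum_congr rfl fun b _ => by ring

lemma trace_mul_vecMulVec {N : Type*} [Fintype N] (S : Matrix N N ℝ) (u : N → ℝ) :
    (S * vecMulVec u u).trace = u ⬝ᵥ S *ᵥ u := by
  simp only [Matrix.trace, Matrix.diag, Matrix.mul_apply, Matrix.vecMulVec_apply,
    dotProduct, Matrix.mulVec, Finset.mul_sum]
  exact Finset.sum_congr rfl fun a _ => Finset.sum_congr rfl fun b _ => by ring

lemma obj_decomp (C₁ : (j : Fin k) → Matrix (Fin (n₁ j)) (Fin (n₁ j)) ℝ)
    (C₂ : (j : Fin l₂) → Matrix (Fin (n₂ j)) (Fin (n₂ j)) ℝ) (c : Fin d → ℝ)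
    (A : Fin m → (j : Fin k) → Matrix (Fin (n₁ j)) (Fin (n₁ j)) ℝ)
    (B : Fin m → (j : Fin l₂) → Matrix (Fin (n₂ j)) (Fin (n₂ j)) ℝ)
    (a : Fin m → Fin d → ℝ) (lam : Fin m → ℝ) (X : BlockPt k l₂ d n₁ n₂) :
    objVal k l₂ d n₁ n₂ C₁ C₂ c X =
      (∑ i, lam i * constrVal k l₂ d m n₁ n₂ A B a i X) +
      ((∑ j, (SlackF k m n₁ C₁ A lam j * X.1 j).trace) +
       (∑ j, (SlackU l₂ m n₂ C₂ B lam j * X.2.1 j).trace) +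
       (∑ t, slackFree d m c a lam t * X.2.2 t)) := by
  have L1 : ∑ j, (SlackF k m n₁ C₁ A lam j * X.1 j).trace
      = ∑ j, (C₁ j * X.1 j).trace - ∑ i, lam i * ∑ j, (A i j * X.1 j).trace := by
    have hterm : ∀ j, (SlackF k m n₁ C₁ A lam j * X.1 j).trace
        = (C₁ j * X.1 j).trace - ∑ i, lam i * (A i j * X.1 j).trace := by
      intro j
      simp [SlackF, Matrix.sub_mul, Matrix.sum_mul, Matrix.smul_mul,
        Matrix.trace_sub, Matrix.trace_sum, Matrix.trace_smul, smul_eq_mul]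
    rw [Finset.sum_congr rfl fun j _ => hterm j, Finset.sum_sub_distrib, Finset.sum_comm]
    simp [Finset.mul_sum]
  have L2 : ∑ j, (SlackU l₂ m n₂ C₂ B lam j * X.2.1 j).trace
      = ∑ j, (C₂ j * X.2.1 j).trace - ∑ i, lam i * ∑ j, (B i j * X.2.1 j).trace := by
    have hterm : ∀ j, (SlackU l₂ m n₂ C₂ B lam j * X.2.1 j).trace
        = (C₂ j * X.2.1 j).trace - ∑ i, lam i * (B i j * X.2.1 j).trace := by
      intro j
      simp [SlackU, Matrix.sub_mul, Matrix.sum_mul, Matrix.smul_mul,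
        Matrix.trace_sub, Matrix.trace_sum, Matrix.trace_smul, smul_eq_mul]
    rw [Finset.sum_congr rfl fun j _ => hterm j, Finset.sum_sub_distrib, Finset.sum_comm]
    simp [Finset.mul_sum]
  have L3 : ∑ t, slackFree d m c a lam t * X.2.2 t
      = ∑ t, c t * X.2.2 t - ∑ i, lam i * ∑ t, a i t * X.2.2 t := by
    have hterm : ∀ t, slackFree d m c a lam t * X.2.2 t
        = c t * X.2.2 t - ∑ i, lam i * (a i t * X.2.2 t) := by
      intro t
      simp only [slackFree, Pi.sub_apply, Finset.sum_apply, Pi.smul_apply, smul_eq_mul,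
        sub_mul, Finset.sum_mul]
      ring_nf
    rw [Finset.sum_congr rfl fun t _ => hterm t, Finset.sum_sub_distrib, Finset.sum_comm]
    simp [Finset.mul_sum]
  rw [L1, L2, L3]
  simp only [objVal, constrVal, mul_add, Finset.sum_add_distrib]
  ring

end Helpers

/-- If `(Y, X̄, x)` is a spurious 2-critical point of (BM_n) with
multiplier `λ`, then `C ∈ 𝒱̲ × 𝒱̄ × {0} + image 𝒜*`: `s(λ) = 0`; some factored block `j`
has `p_j ≤ n_j` and `rank S_j(λ) ≤ n_j - p_j`; and the rank tuple `r_j = rank X_j` of the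
unfactored blocks is attainable with `rank S_j(λ) ≤ n_j - r_j` for all `j > k`. -/
theorem block_spurious_implies_cost_in_bad_set
    (k l₂ d m : ℕ) (n₁ : Fin k → ℕ) (n₂ : Fin l₂ → ℕ) (p : Fin k → ℕ)
    (C₁ : (j : Fin k) → Matrix (Fin (n₁ j)) (Fin (n₁ j)) ℝ)
    (C₂ : (j : Fin l₂) → Matrix (Fin (n₂ j)) (Fin (n₂ j)) ℝ) (c : Fin d → ℝ)
    (hC₁ : ∀ j, (C₁ j).IsSymm) (hC₂ : ∀ j, (C₂ j).IsSymm)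
    (A : Fin m → (j : Fin k) → Matrix (Fin (n₁ j)) (Fin (n₁ j)) ℝ)
    (B : Fin m → (j : Fin l₂) → Matrix (Fin (n₂ j)) (Fin (n₂ j)) ℝ)
    (a : Fin m → Fin d → ℝ) (b : Fin m → ℝ)
    (hA : ∀ i j, (A i j).IsSymm) (hB : ∀ i j, (B i j).IsSymm)
    (Y : (j : Fin k) → Matrix (Fin (n₁ j)) (Fin (p j)) ℝ)
    (Xbar : (j : Fin l₂) → Matrix (Fin (n₂ j)) (Fin (n₂ j)) ℝ)
    (x : Fin d → ℝ) (lam : Fin m → ℝ)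
    (hcrit : IsCrit2B k l₂ d m n₁ n₂ p C₁ C₂ c A B a b Y Xbar x lam)
    (hspur : ¬ IsOptimalB k l₂ d m n₁ n₂ C₁ C₂ c A B a b (fun j => Y j * (Y j)ᵀ, Xbar, x)) :
    slackFree d m c a lam = 0 ∧
    (∃ j : Fin k, p j ≤ n₁ j ∧
      ((SlackF k m n₁ C₁ A lam j).rank : ℤ) ≤ (n₁ j : ℤ) - (p j : ℤ)) ∧
    AttainableRanks k l₂ d m n₁ n₂ A B a b (fun j => (Xbar j).rank) ∧
    ∀ j : Fin l₂,
      ((SlackU l₂ m n₂ C₂ B lam j).rank : ℤ) ≤ (n₂ j : ℤ) - ((Xbar j).rank : ℤ) := by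
    classical
  obtain ⟨⟨hfeas, hs, hSY, hSU⟩, h2nd⟩ := hcrit
  -- symmetry of the factored slack matrices
  have hSymm : ∀ j, (SlackF k m n₁ C₁ A lam j).IsHermitian := by
    intro j
    rw [Matrix.IsHermitian, Matrix.conjTranspose_eq_transpose_of_trivial]
    show (SlackF k m n₁ C₁ A lam j)ᵀ = _
    simp only [SlackF, Matrix.transpose_sub, Matrix.transpose_sum, Matrix.transpose_smul]
    rw [hC₁ j]
    congr 1
    exact Finset.sum_congr rfl fun i _ => by rw [hA i j]
  -- the key claim: some factored block has full-column-rank Y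
  have key : ∃ j : Fin k, ∀ z, Y j *ᵥ z = 0 → z = 0 := by
    by_contra hnoj
    push_neg at hnoj
    -- then every factored slack matrix is PSD
    have hpsd : ∀ j, (SlackF k m n₁ C₁ A lam j).PosSemidef := by
      intro j
      obtain ⟨z, hz, hz0⟩ := hnoj j
      refine .of_dotProduct_mulVec_nonneg (hSymm j) fun u => ?_
      have hUY : vecMulVec u z * (Y j)ᵀ = 0 :=
        vecMulVec_mul_transpose_eq_zero u z (Y j) hz
      have hYU : Y j * (vecMulVec u z)ᵀ = 0 := by
        have := congrArg Matrix.transpose hUY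
        rwa [Matrix.transpose_mul, Matrix.transpose_transpose, Matrix.transpose_zero] at this
      have hcond : ∀ i, (A i j * (vecMulVec u z * (Y j)ᵀ + Y j * (vecMulVec u z)ᵀ)).trace = 0 := by
        intro i; rw [hUY, hYU]; simp
      have h2 := h2nd j (vecMulVec u z) hcond
      rw [vecMulVec_mul_self_transpose, Matrix.mul_smul, Matrix.trace_smul,
        trace_mul_vecMulVec] at h2
      have hzpos : 0 < ∑ b, z b ^ 2 := by
        have hex : ∃ b, z b ≠ 0 := by
          by_contra hb; push_neg at hb; exact hz0 (funext hb)
        obtain ⟨b, hb⟩ := hex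
        exact Finset.sum_pos' (fun _ _ => sq_nonneg _)
          ⟨b, Finset.mem_univ b, by positivity⟩
      have := (mul_nonneg_iff_of_pos_left hzpos).mp (by simpa [smul_eq_mul] using h2)
      simpa using this
    -- hence the point is optimal, contradicting spuriousness
    refine hspur ⟨hfeas, fun X' hX' => ?_⟩
    have hd1 := obj_decomp k l₂ d m n₁ n₂ C₁ C₂ c A B a lam
      (fun j => Y j * (Y j)ᵀ, Xbar, x)
    have hd2 := obj_decomp k l₂ d m n₁ n₂ C₁ C₂ c A B a lam X'
    have hcv1 : ∀ i, constrVal k l₂ d m n₁ n₂ A B a i (fun j => Y j * (Y j)ᵀ, Xbar, x) = b i :=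
      hfeas.2.2
    have hcv2 : ∀ i, constrVal k l₂ d m n₁ n₂ A B a i X' = b i := hX'.2.2
    have hz1 : (∑ j, (SlackF k m n₁ C₁ A lam j *
          ((fun j => Y j * (Y j)ᵀ, Xbar, x) : BlockPt k l₂ d n₁ n₂).1 j).trace) = 0 := by
      refine Finset.sum_eq_zero fun j _ => ?_
      show (SlackF k m n₁ C₁ A lam j * (Y j * (Y j)ᵀ)).trace = 0
      rw [← Matrix.mul_assoc, hSY j, Matrix.zero_mul, Matrix.trace_zero]
    have hz2 : (∑ j, (SlackU l₂ m n₂ C₂ B lam j * Xbar j).trace) = 0 :=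
      Finset.sum_eq_zero fun j _ => (hSU j).2
    have hz3 : ∀ t, slackFree d m c a lam t = 0 := fun t => congrFun hs t
    have hnn1 : 0 ≤ ∑ j, (SlackF k m n₁ C₁ A lam j * X'.1 j).trace :=
      Finset.sum_nonneg fun j _ => psd_trace_mul_nonneg (hpsd j) (hX'.1 j)
    have hnn2 : 0 ≤ ∑ j, (SlackU l₂ m n₂ C₂ B lam j * X'.2.1 j).trace :=
      Finset.sum_nonneg fun j _ => psd_trace_mul_nonneg (hSU j).1 (hX'.2.1 j)
    rw [hd1, hd2]
    simp only [hz1, hz2, hz3, zero_mul, Finset.sum_const_zero, add_zero, zero_add]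
    have hsum : (∑ i, lam i * constrVal k l₂ d m n₁ n₂ A B a i
          (fun j => Y j * (Y j)ᵀ, Xbar, x)) = ∑ i, lam i * constrVal k l₂ d m n₁ n₂ A B a i X' := by
      refine Finset.sum_congr rfl fun i _ => ?_
      rw [hcv1 i, hcv2 i]
    rw [hsum]
    nlinarith [hnn1, hnn2]
  obtain ⟨j₀, hj₀⟩ := key
  refine ⟨hs, ⟨j₀, ?_, ?_⟩, ⟨(fun j => Y j * (Y j)ᵀ, Xbar, x), hfeas, fun j => rfl⟩, ?_⟩
  · -- p j₀ ≤ n₁ j₀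
    have hrY : (Y j₀).rank = p j₀ := rank_eq_of_ker _ hj₀
    have := (Y j₀).rank_le_card_height
    rw [hrY, Fintype.card_fin] at this
    exact this
  · -- rank bound for the factored slack
    have hrY : (Y j₀).rank = p j₀ := rank_eq_of_ker _ hj₀
    have hmul : SlackF k m n₁ C₁ A lam j₀ * Y j₀ = 0 := hSY j₀
    have hle := Matrix.rank_add_rank_le_card_of_mul_eq_zero hmul
    rw [hrY, Fintype.card_fin] at hle
    omega
  · -- rank bounds for the unfactored slacks
    intro j
    have hXj := hfeas.2.1 j
    have h0 : SlackU l₂ m n₂ C₂ B lam j * Xbar j = 0 :=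
      psd_mul_eq_zero_of_trace (hSU j).1 hXj (hSU j).2
    have hle := Matrix.rank_add_rank_le_card_of_mul_eq_zero h0
    rw [Fintype.card_fin] at hle
    omega
end
end

section
/- Let (Y, X̄, x) be a 2-critical point of (BM_n) such that for every j ∈ {1,…,k} the factor Y_j ∈ ℝ^{n_j×p_j} has linearly dependent columns (i.e., rank Y_j < p_j). Then (Y₁Y₁ᵀ,…,Y_kY_kᵀ, X_{k+1},…,X_ℓ, x) is an optimal solution of (SDP_n). -/
open Matrix MeasureTheory

noncomputable section

/- Block SDP setting: the PSD blocks `1, …, ℓ` are split into the `k` factored blocks,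
of sizes `n₁ : Fin k → ℕ` (with factorization ranks `p : Fin k → ℕ`), and the `ℓ - k`
unfactored blocks, of sizes `n₂ : Fin l₂ → ℕ`; there is also a free variable in `ℝ^d`.
A linear map `𝒜 : E → ℝᵐ` on `E = S^{n₁} × ⋯ × S^{n_ℓ} × ℝ^d` is represented by symmetric
matrices `A i j`, `B i j` and vectors `a i`, so that the adjoint is
`𝒜*(λ) = (Σᵢ λᵢ A i ·, Σᵢ λᵢ B i ·, Σᵢ λᵢ a i)`. -/

variable (k l₂ d m : ℕ) (n₁ : Fin k → ℕ) (n₂ : Fin l₂ → ℕ) (p : Fin k → ℕ)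

section AuxBM

lemma myTrace_nonneg {n : ℕ} {M : Matrix (Fin n) (Fin n) ℝ} (hM : M.PosSemidef) :
    0 ≤ M.trace := by
  rw [Matrix.trace]
  refine Finset.sum_nonneg fun i _ => ?_
  have := hM.dotProduct_mulVec_nonneg (Pi.single i 1)
  simpa [dotProduct, Matrix.mulVec, Pi.single_apply, Finset.mul_sum] using this

lemma myTrace_mul_nonneg {n : ℕ} {S X : Matrix (Fin n) (Fin n) ℝ}
    (hS : S.PosSemidef) (hX : X.PosSemidef) : 0 ≤ (S * X).trace := by
  open scoped MatrixOrder in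
  obtain ⟨B, hB⟩ := CStarAlgebra.nonneg_iff_eq_star_mul_self.mp hX.nonneg
  rw [hB, ← Matrix.mul_assoc, Matrix.trace_mul_comm, ← Matrix.mul_assoc]
  exact myTrace_nonneg (hS.mul_mul_conjTranspose_same B)

lemma myHerm {n : ℕ} {M : Matrix (Fin n) (Fin n) ℝ} (h : M.IsSymm) : M.IsHermitian := by
  rwa [Matrix.IsHermitian, Matrix.conjTranspose_eq_transpose_of_trivial]

lemma exists_ker {n q : ℕ} {Y : Matrix (Fin n) (Fin q) ℝ} (h : Y.rank < q) :
    ∃ z : Fin q → ℝ, Y.mulVec z = 0 ∧ z ≠ 0 := by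
  by_contra hc
  push_neg at hc
  have hker : LinearMap.ker Y.mulVecLin = ⊥ := by
    rw [Submodule.eq_bot_iff]
    intro z hz
    exact hc z (by simpa [Matrix.mulVecLin_apply] using hz)
  have hfr := LinearMap.finrank_range_add_finrank_ker Y.mulVecLin
  rw [hker, finrank_bot, add_zero] at hfr
  have : Y.rank = q := by
    rw [Matrix.rank, hfr]
    simp
  omega

end AuxBM

/-- If `(Y, X̄, x)` is a 2-critical point of (BM_n) such that every
factor `Y_j` (for `j ≤ k`) has linearly dependent columns, i.e. `rank Y_j < p_j`, then the
corresponding point `(Y₁Y₁ᵀ, …, Y_kY_kᵀ, X_{k+1}, …, X_ℓ, x)` is optimal for (SDP_n). -/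
theorem block_crit2_rank_deficient_implies_optimal
    (k l₂ d m : ℕ) (n₁ : Fin k → ℕ) (n₂ : Fin l₂ → ℕ) (p : Fin k → ℕ)
    (C₁ : (j : Fin k) → Matrix (Fin (n₁ j)) (Fin (n₁ j)) ℝ)
    (C₂ : (j : Fin l₂) → Matrix (Fin (n₂ j)) (Fin (n₂ j)) ℝ) (c : Fin d → ℝ)
    (hC₁ : ∀ j, (C₁ j).IsSymm) (hC₂ : ∀ j, (C₂ j).IsSymm)
    (A : Fin m → (j : Fin k) → Matrix (Fin (n₁ j)) (Fin (n₁ j)) ℝ)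
    (B : Fin m → (j : Fin l₂) → Matrix (Fin (n₂ j)) (Fin (n₂ j)) ℝ)
    (a : Fin m → Fin d → ℝ) (b : Fin m → ℝ)
    (hA : ∀ i j, (A i j).IsSymm) (hB : ∀ i j, (B i j).IsSymm)
    (Y : (j : Fin k) → Matrix (Fin (n₁ j)) (Fin (p j)) ℝ)
    (Xbar : (j : Fin l₂) → Matrix (Fin (n₂ j)) (Fin (n₂ j)) ℝ)
    (x : Fin d → ℝ)
    (hcrit : ∃ lam : Fin m → ℝ, IsCrit2B k l₂ d m n₁ n₂ p C₁ C₂ c A B a b Y Xbar x lam)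
    (hrank : ∀ j : Fin k, (Y j).rank < p j) :
    IsOptimalB k l₂ d m n₁ n₂ C₁ C₂ c A B a b (fun j => Y j * (Y j)ᵀ, Xbar, x) := by
  
  obtain ⟨lam, hcrit1, hcrit2⟩ := hcrit
  obtain ⟨hfeas, hfree, hSF, hSU⟩ := hcrit1
  -- PSD of the factored slacks
  have hSFherm : ∀ j, (SlackF k m n₁ C₁ A lam j).IsSymm := by
    intro j
    unfold SlackF
    rw [Matrix.IsSymm, Matrix.transpose_sub, Matrix.transpose_sum]
    rw [(hC₁ j)]
    congr 1
    refine Finset.sum_congr rfl fun i _ => ?_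
    rw [Matrix.transpose_smul, (hA i j)]
  have hSFpsd : ∀ j, (SlackF k m n₁ C₁ A lam j).PosSemidef := by
    intro j
    refine Matrix.PosSemidef.of_dotProduct_mulVec_nonneg (myHerm (hSFherm j)) fun u => ?_
    obtain ⟨z, hz0, hzne⟩ := exists_ker (hrank j)
    set U : Matrix (Fin (n₁ j)) (Fin (p j)) ℝ := fun i t => u i * z t with hU
    have hYU : (Y j) * Uᵀ = 0 := by
      ext i i'
      simp only [Matrix.mul_apply, Matrix.transpose_apply]
      simp only [hU]
      have : ∀ t, Y j i t * (u i' * z t) = u i' * (Y j i t * z t) := fun t => by ring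
      simp only [this, ← Finset.mul_sum]
      have := congrFun hz0 i
      simp only [Matrix.mulVec, dotProduct] at this
      simp [this]
    have hUY : U * (Y j)ᵀ = 0 := by
      have : (U * (Y j)ᵀ)ᵀ = 0 := by
        rw [Matrix.transpose_mul, Matrix.transpose_transpose, hYU]
      calc U * (Y j)ᵀ = ((U * (Y j)ᵀ)ᵀ)ᵀ := by rw [Matrix.transpose_transpose]
        _ = 0 := by rw [this]; simp
    have h2 := hcrit2 j U (fun i => by rw [hUY, hYU]; simp)
    have hUUt : U * Uᵀ = (∑ t, z t ^ 2) • Matrix.of (fun i i' => u i * u i') := by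
      ext i i'
      simp only [Matrix.mul_apply, Matrix.transpose_apply, Matrix.smul_apply, Matrix.of_apply,
        smul_eq_mul, Finset.sum_mul]
      simp only [hU]
      exact Finset.sum_congr rfl fun t _ => by ring
    have htr : (SlackF k m n₁ C₁ A lam j * (U * Uᵀ)).trace
        = (∑ t, z t ^ 2) * (star u ⬝ᵥ (SlackF k m n₁ C₁ A lam j).mulVec u) := by
      rw [hUUt, Matrix.mul_smul, Matrix.trace_smul, smul_eq_mul]
      congr 1
      simp only [Matrix.trace, Matrix.diag, Matrix.mul_apply, Matrix.of_apply,
        dotProduct, Matrix.mulVec, star_trivial, Finset.mul_sum]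
      exact Finset.sum_congr rfl fun i _ => Finset.sum_congr rfl fun i' _ => by ring
    rw [htr] at h2
    have hzpos : 0 < ∑ t, z t ^ 2 := by
      rcases Function.ne_iff.mp hzne with ⟨t, ht⟩
      have hne : z t ^ 2 ≠ 0 := pow_ne_zero 2 ht
      have : (0:ℝ) < z t ^ 2 := lt_of_le_of_ne (sq_nonneg _) (Ne.symm hne)
      exact Finset.sum_pos' (fun s _ => sq_nonneg _) ⟨t, Finset.mem_univ t, this⟩
    nlinarith [h2]
  -- objective value identity on the feasible set
  have hobj : ∀ Z : BlockPt k l₂ d n₁ n₂,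
      (∀ i, constrVal k l₂ d m n₁ n₂ A B a i Z = b i) →
      objVal k l₂ d n₁ n₂ C₁ C₂ c Z = (∑ i, lam i * b i)
        + ((∑ j, (SlackF k m n₁ C₁ A lam j * Z.1 j).trace)
          + (∑ j, (SlackU l₂ m n₂ C₂ B lam j * Z.2.1 j).trace)
          + ∑ t, slackFree d m c a lam t * Z.2.2 t) := by
    intro Z hZ
    have hb : ∑ i, lam i * b i = ∑ i, lam i * constrVal k l₂ d m n₁ n₂ A B a i Z := by
      simp [hZ]
    rw [hb]
    simp only [objVal, constrVal, SlackF, SlackU, slackFree, Matrix.sub_mul,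
      Matrix.trace_sub, Matrix.sum_mul, Matrix.trace_sum, Matrix.smul_mul,
      Matrix.trace_smul, smul_eq_mul, Pi.sub_apply, Finset.sum_apply, Pi.smul_apply,
      Finset.sum_sub_distrib, mul_add, Finset.mul_sum, Finset.sum_mul,
      Finset.sum_add_distrib, sub_mul]
    have hd : ∑ x : Fin m, ∑ i : Fin d, lam x * (a x i * Z.2.2 i)
        = ∑ i : Fin d, ∑ x : Fin m, lam x * a x i * Z.2.2 i := by
      rw [Finset.sum_comm]
      exact Finset.sum_congr rfl fun _ _ => Finset.sum_congr rfl fun _ _ => by ring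
    have hA2 : ∑ x : Fin m, ∑ x_1 : Fin k, lam x * (A x x_1 * Z.1 x_1).trace
        = ∑ x_1 : Fin k, ∑ x : Fin m, lam x * (A x x_1 * Z.1 x_1).trace := Finset.sum_comm
    have hB2 : ∑ x : Fin m, ∑ i : Fin l₂, lam x * (B x i * Z.2.1 i).trace
        = ∑ i : Fin l₂, ∑ x : Fin m, lam x * (B x i * Z.2.1 i).trace := Finset.sum_comm
    rw [hd, hA2, hB2]
    ring
  -- value at the critical point
  have hXval : objVal k l₂ d n₁ n₂ C₁ C₂ c (fun j => Y j * (Y j)ᵀ, Xbar, x)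
      = ∑ i, lam i * b i := by
    rw [hobj _ hfeas.2.2]
    have h1 : ∀ j, (SlackF k m n₁ C₁ A lam j * (Y j * (Y j)ᵀ)).trace = 0 := by
      intro j
      rw [← Matrix.mul_assoc, hSF j]
      simp
    simp [h1, fun j => (hSU j).2, hfree]
  constructor
  · exact hfeas
  · intro X' hX'
    rw [hXval, hobj X' hX'.2.2]
    have h1 : 0 ≤ ∑ j, (SlackF k m n₁ C₁ A lam j * X'.1 j).trace :=
      Finset.sum_nonneg fun j _ => myTrace_mul_nonneg (hSFpsd j) (hX'.1 j)
    have h2 : 0 ≤ ∑ j, (SlackU l₂ m n₂ C₂ B lam j * X'.2.1 j).trace :=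
      Finset.sum_nonneg fun j _ => myTrace_mul_nonneg (hSU j).1 (hX'.2.1 j)
    have h3 : ∑ t, slackFree d m c a lam t * X'.2.2 t = 0 := by simp [hfree]
    linarith
end
end
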